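/- (Birkhoff-type characterization of ergodicity) Let (V,v) be the pair of upper and lower probabilities on a measurable space (Ω,𝓕) generated by a nonempty set 𝒫 of finitely additive probabilities, assume V and v are continuous, and let θ : Ω → Ω be a measurable transformation preserving V. Then θ is ergodic with respect to V if and only if for every bounded measurable ξ : Ω → ℝ there exists a constant c ∈ ℝ such that (1/n) ∑_{k=0}^{n−1} ξ(θ^k ω) converges to c as n → ∞ quasi-surely, i.e. V({ω : (1/n) ∑_{k=0}^{n−1} ξ(θ^k ω) does not converge to c}) = 0. -/

import Mathlib

open MeasureTheory Filter Topology Set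

def IsFinAddProb {Ω : Type*} [MeasurableSpace Ω] (P : Set Ω → ℝ) : Prop :=
  P ∅ = 0 ∧ P Set.univ = 1 ∧
    (∀ A : Set Ω, MeasurableSet A → 0 ≤ P A ∧ P A ≤ 1) ∧
    (∀ A B : Set Ω, MeasurableSet A → MeasurableSet B → Disjoint A B →
      P (A ∪ B) = P A + P B)

def IsCapacity {Ω : Type*} [MeasurableSpace Ω] (μ : Set Ω → ℝ) : Prop :=
  μ ∅ = 0 ∧ μ Set.univ = 1 ∧
    ∀ A B : Set Ω, MeasurableSet A → MeasurableSet B → A ⊆ B → μ A ≤ μ B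

def ContBelow {Ω : Type*} [MeasurableSpace Ω] (μ : Set Ω → ℝ) : Prop :=
  ∀ A : ℕ → Set Ω, (∀ n, MeasurableSet (A n)) → Monotone A →
    Filter.Tendsto (fun n => μ (A n)) Filter.atTop (nhds (μ (⋃ n, A n)))

def ContAbove {Ω : Type*} [MeasurableSpace Ω] (μ : Set Ω → ℝ) : Prop :=
  ∀ A : ℕ → Set Ω, (∀ n, MeasurableSet (A n)) → Antitone A →
    Filter.Tendsto (fun n => μ (A n)) Filter.atTop (nhds (μ (⋂ n, A n)))

def ContAtEmpty {Ω : Type*} [MeasurableSpace Ω] (μ : Set Ω → ℝ) : Prop :=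
  ∀ A : ℕ → Set Ω, (∀ n, MeasurableSet (A n)) → Antitone A → (⋂ n, A n) = ∅ →
    Filter.Tendsto (fun n => μ (A n)) Filter.atTop (nhds 0)

def ContAtUniv {Ω : Type*} [MeasurableSpace Ω] (μ : Set Ω → ℝ) : Prop :=
  ∀ A : ℕ → Set Ω, (∀ n, MeasurableSet (A n)) → Monotone A → (⋃ n, A n) = Set.univ →
    Filter.Tendsto (fun n => μ (A n)) Filter.atTop (nhds 1)

def conjCap {Ω : Type*} (μ : Set Ω → ℝ) (A : Set Ω) : ℝ := 1 - μ Aᶜ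

noncomputable def choquet {Ω : Type*} (μ : Set Ω → ℝ) (ξ : Ω → ℝ) : ℝ :=
  (∫ t in Set.Ioi (0:ℝ), μ {ω | ξ ω ≥ t}) +
    (∫ t in Set.Iio (0:ℝ), (μ {ω | ξ ω ≥ t} - 1))

noncomputable def choquetE {Ω : Type*} (μ : Set Ω → ℝ) (ξ : Ω → EReal) : ℝ :=
  (∫ t in Set.Ioi (0:ℝ), μ {ω | (t : EReal) ≤ ξ ω}) +
    (∫ t in Set.Iio (0:ℝ), (μ {ω | (t : EReal) ≤ ξ ω} - 1))

def UpperProbOf {Ω : Type*} [MeasurableSpace Ω] (𝒮 : Set (Set Ω → ℝ)) (V : Set Ω → ℝ) : Prop :=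
  ∀ A : Set Ω, MeasurableSet A → V A = sSup ((fun P => P A) '' 𝒮)

def LowerProbOf {Ω : Type*} [MeasurableSpace Ω] (𝒮 : Set (Set Ω → ℝ)) (v : Set Ω → ℝ) : Prop :=
  ∀ A : Set Ω, MeasurableSet A → v A = sInf ((fun P => P A) '' 𝒮)

def ErgodicCap {Ω : Type*} [MeasurableSpace Ω] (μ : Set Ω → ℝ) (θ : Ω → Ω) : Prop :=
  ∀ B : Set Ω, MeasurableSet B → θ ⁻¹' B = B →
    (μ B = 0 ∨ μ B = 1) ∧ (μ B = 0 ∨ μ Bᶜ = 0)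

def PreservesCap {Ω : Type*} [MeasurableSpace Ω] (μ : Set Ω → ℝ) (θ : Ω → Ω) : Prop :=
  ∀ A : Set Ω, MeasurableSet A → μ (θ ⁻¹' A) = μ A

def IndepSigmaWrt {Ω : Type*} (μ : Set Ω → ℝ) (m₁ m₂ : MeasurableSpace Ω) : Prop :=
  ∀ A B : Set Ω, MeasurableSet[m₁] A → MeasurableSet[m₂] B → μ (A ∩ B) = μ A * μ B


set_option linter.unusedSectionVars false
set_option maxHeartbeats 1000000
namespace Stmt16Aux

variable {Ω : Type*} [MeasurableSpace Ω]

/-- Birkhoff sum -/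
def bS (θ : Ω → Ω) (f : Ω → ℝ) (n : ℕ) (x : Ω) : ℝ := ∑ k ∈ Finset.range n, f (θ^[k] x)

noncomputable def avg (θ : Ω → Ω) (f : Ω → ℝ) (n : ℕ) (x : Ω) : ℝ := (1 / (n:ℝ)) * bS θ f n x

lemma bS_succ' (θ : Ω → Ω) (f : Ω → ℝ) (n : ℕ) (x : Ω) :
    bS θ f (n+1) x = f x + bS θ f n (θ x) := by
  unfold bS
  rw [Finset.sum_range_succ']
  simp [Function.iterate_succ_apply, add_comm]

lemma bS_zero (θ : Ω → Ω) (f : Ω → ℝ) (x : Ω) : bS θ f 0 x = 0 := by simp [bS]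

lemma bS_measurable {θ : Ω → Ω} {f : Ω → ℝ} (hθ : Measurable θ) (hf : Measurable f) (n : ℕ) :
    Measurable (bS θ f n) := by
  unfold bS
  exact Finset.measurable_sum _ fun k _ => hf.comp (hθ.iterate k)

lemma abs_bS_le {θ : Ω → Ω} {f : Ω → ℝ} {C : ℝ} (hC : ∀ x, |f x| ≤ C) (n : ℕ) (x : Ω) :
    |bS θ f n x| ≤ n * C := by
  calc |∑ k ∈ Finset.range n, f (θ^[k] x)| ≤ ∑ k ∈ Finset.range n, |f (θ^[k] x)| :=
        Finset.abs_sum_le_sum_abs _ _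
    _ ≤ ∑ _k ∈ Finset.range n, C := Finset.sum_le_sum fun k _ => hC _
    _ = n * C := by simp [mul_comm]

/-- running maximum `max (0, S₁, …, S_N)` -/
noncomputable def bM (θ : Ω → Ω) (f : Ω → ℝ) : ℕ → Ω → ℝ
  | 0 => fun _ => 0
  | (N+1) => fun x => max (bM θ f N x) (bS θ f (N+1) x)

lemma bM_nonneg (θ : Ω → Ω) (f : Ω → ℝ) (N : ℕ) (x : Ω) : 0 ≤ bM θ f N x := by
  induction N with
  | zero => simp [bM]
  | succ N ih => exact le_trans ih (le_max_left _ _)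

lemma bM_mono (θ : Ω → Ω) (f : Ω → ℝ) {N N' : ℕ} (h : N ≤ N') (x : Ω) :
    bM θ f N x ≤ bM θ f N' x := by
  induction N' with
  | zero => simpa [Nat.le_zero.mp h] using le_refl _
  | succ N' ih =>
    rcases Nat.lt_or_ge N (N'+1) with h' | h'
    · exact le_trans (ih (Nat.lt_succ_iff.mp h')) (le_max_left _ _)
    · have : N = N' + 1 := le_antisymm h h'
      simp [this]

lemma bS_le_bM (θ : Ω → Ω) (f : Ω → ℝ) {k N : ℕ} (hk : 1 ≤ k) (h : k ≤ N) (x : Ω) :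
    bS θ f k x ≤ bM θ f N x := by
  induction N with
  | zero => omega
  | succ N ih =>
    rcases Nat.lt_or_ge k (N+1) with h' | h'
    · exact le_trans (ih (Nat.lt_succ_iff.mp h')) (le_max_left _ _)
    · have : k = N + 1 := le_antisymm h h'
      subst this
      exact le_max_right _ _

lemma bM_eq_bS (θ : Ω → Ω) (f : Ω → ℝ) (N : ℕ) (x : Ω) :
    bM θ f N x = 0 ∨ ∃ k, 1 ≤ k ∧ k ≤ N ∧ bM θ f N x = bS θ f k x := by
  induction N with
  | zero => left; rfl
  | succ N ih =>
    rcases le_or_gt (bS θ f (N+1) x) (bM θ f N x) with h | h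
    · have hM : bM θ f (N+1) x = bM θ f N x := max_eq_left h
      rcases ih with h0 | ⟨k, hk1, hk2, hk3⟩
      · left; rw [hM, h0]
      · right; exact ⟨k, hk1, le_trans hk2 (Nat.le_succ _), by rw [hM, hk3]⟩
    · right
      exact ⟨N+1, Nat.succ_le_succ (Nat.zero_le _), le_refl _, max_eq_right h.le⟩

lemma bM_measurable {θ : Ω → Ω} {f : Ω → ℝ} (hθ : Measurable θ) (hf : Measurable f) (N : ℕ) :
    Measurable (bM θ f N) := by
  induction N with
  | zero => exact measurable_const
  | succ N ih => exact Measurable.max ih (bS_measurable hθ hf (N+1))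

lemma abs_bM_le {θ : Ω → Ω} {f : Ω → ℝ} {C : ℝ} (hC : ∀ x, |f x| ≤ C) (N : ℕ) (x : Ω) :
    |bM θ f N x| ≤ N * C + 1 := by
  have hC0 : 0 ≤ C := le_trans (abs_nonneg _) (hC x)
  rw [abs_of_nonneg (bM_nonneg θ f N x)]
  rcases bM_eq_bS θ f N x with h | ⟨k, _, hk2, h⟩
  · rw [h]; positivity
  · rw [h]
    calc bS θ f k x ≤ |bS θ f k x| := le_abs_self _
      _ ≤ k * C := abs_bS_le hC k x
      _ ≤ N * C + 1 := by nlinarith [(Nat.cast_le (α := ℝ)).mpr hk2]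



variable {Ω : Type*} [MeasurableSpace Ω]

lemma integrable_of_bounded {μ : Measure Ω} [IsFiniteMeasure μ] {g : Ω → ℝ} {D : ℝ}
    (hg : Measurable g) (hD : ∀ x, |g x| ≤ D) : Integrable g μ :=
  ⟨hg.aestronglyMeasurable, HasFiniteIntegral.of_bounded (C := D) (ae_of_all _ hD)⟩

/-- Maximal ergodic theorem (Garsia). -/
lemma maximal_ergodic {θ : Ω → Ω} {f : Ω → ℝ} {μ : Measure Ω} [IsProbabilityMeasure μ]
    (hθ : Measurable θ) (hpres : MeasurePreserving θ μ μ) (hf : Measurable f)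
    {C : ℝ} (hC : ∀ x, |f x| ≤ C) (N : ℕ) :
    0 ≤ ∫ x in {x | 0 < bM θ f N x}, f x ∂μ := by
  set E := {x | 0 < bM θ f N x} with hEdef
  have hE : MeasurableSet E := measurableSet_lt measurable_const (bM_measurable hθ hf N)
  have hMmeas := bM_measurable hθ hf N
  have hMbd := abs_bM_le (θ := θ) hC N
  have hfint : Integrable f μ := integrable_of_bounded hf hC
  have hMint : Integrable (bM θ f N) μ := integrable_of_bounded hMmeas hMbd
  have hMθmeas : Measurable (fun x => bM θ f N (θ x)) := hMmeas.comp hθ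
  have hMθint : Integrable (fun x => bM θ f N (θ x)) μ :=
    integrable_of_bounded hMθmeas (fun x => hMbd (θ x))
  -- pointwise inequality on E
  have hpt : ∀ x ∈ E, bM θ f N x - bM θ f N (θ x) ≤ f x := by
    intro x hx
    have hx' : 0 < bM θ f N x := hx
    rcases bM_eq_bS θ f N x with h0 | ⟨k, hk1, hk2, hk3⟩
    · rw [h0] at hx'; exact absurd hx' (lt_irrefl 0)
    · obtain ⟨m, rfl⟩ : ∃ m, k = m + 1 := ⟨k - 1, by omega⟩
      have : bS θ f (m+1) x = f x + bS θ f m (θ x) := bS_succ' θ f m x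
      have hbs : bS θ f m (θ x) ≤ bM θ f N (θ x) := by
        rcases Nat.eq_zero_or_pos m with rfl | hm
        · rw [bS_zero]; exact bM_nonneg _ _ _ _
        · exact bS_le_bM θ f hm (by omega) (θ x)
      rw [hk3, this]
      linarith
  -- integral chain
  have h1 : ∫ x in E, (bM θ f N x - bM θ f N (θ x)) ∂μ ≤ ∫ x in E, f x ∂μ := by
    refine setIntegral_mono_on ((hMint.sub hMθint).integrableOn) (hfint.integrableOn) hE hpt
  have h2 : ∫ x in E, (bM θ f N x - bM θ f N (θ x)) ∂μ
      = ∫ x in E, bM θ f N x ∂μ - ∫ x in E, bM θ f N (θ x) ∂μ :=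
    integral_sub (hMint.integrableOn) (hMθint.integrableOn)
  have h3 : ∫ x in E, bM θ f N x ∂μ = ∫ x, bM θ f N x ∂μ := by
    rw [← integral_add_compl hE hMint]
    have : ∫ x in Eᶜ, bM θ f N x ∂μ = 0 := by
      rw [setIntegral_congr_fun hE.compl (g := fun _ => (0:ℝ))]
      · simp
      · intro x hx
        have h1 : ¬ (0 < bM θ f N x) := hx
        exact le_antisymm (not_lt.mp h1) (bM_nonneg _ _ _ _)
    rw [this, add_zero]
  have h4 : ∫ x in E, bM θ f N (θ x) ∂μ ≤ ∫ x, bM θ f N (θ x) ∂μ :=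
    setIntegral_le_integral hMθint (ae_of_all _ (fun x => bM_nonneg _ _ _ _))
  have h5 : ∫ x, bM θ f N (θ x) ∂μ = ∫ x, bM θ f N x ∂μ := by
    have := integral_map (μ := μ) hθ.aemeasurable hMmeas.aestronglyMeasurable
    rw [hpres.map_eq] at this
    exact this.symm
  linarith




lemma orbit_mem {θ : Ω → Ω} {E : Set Ω} (hinv : θ ⁻¹' E = E) (k : ℕ) (x : Ω) :
    θ^[k] x ∈ E ↔ x ∈ E := by
  induction k generalizing x with
  | zero => simp
  | succ k ih =>
    rw [Function.iterate_succ_apply]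
    have hx : θ x ∈ E ↔ x ∈ E := by
      have := Set.ext_iff.mp hinv x
      simpa using this
    exact (ih (θ x)).trans hx

lemma lemmaB {θ : Ω → Ω} {f : Ω → ℝ} {μ : Measure Ω} [IsProbabilityMeasure μ]
    (hθ : Measurable θ) (hpres : MeasurePreserving θ μ μ) (hf : Measurable f)
    {C : ℝ} (hC : ∀ x, |f x| ≤ C) {E : Set Ω} (hE : MeasurableSet E) (hinv : θ ⁻¹' E = E)
    {b : ℝ} (hb : ∀ x ∈ E, ∃ n, 1 ≤ n ∧ b * n < bS θ f n x) :
    b * (μ E).toReal ≤ ∫ x in E, f x ∂μ := by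
  classical
  set φ : Ω → ℝ := E.indicator (fun x => f x - b) with hφdef
  have hφm : Measurable φ := (hf.sub measurable_const).indicator hE
  have hφbd : ∀ x, |φ x| ≤ C + |b| := by
    intro x
    by_cases hx : x ∈ E
    · rw [hφdef, indicator_of_mem hx]
      calc |f x - b| ≤ |f x| + |b| := abs_sub _ _
        _ ≤ C + |b| := by linarith [hC x]
    · rw [hφdef, indicator_of_notMem hx]
      simp only [abs_zero]
      have hC0 : 0 ≤ C := le_trans (abs_nonneg _) (hC x)
      positivity
  have hmem : ∀ (k : ℕ) (x : Ω), (θ^[k] x ∈ E ↔ x ∈ E) := fun k x => orbit_mem hinv k x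
  have hSin : ∀ (n : ℕ) (x : Ω), x ∈ E → bS θ φ n x = bS θ f n x - n * b := by
    intro n x hx
    unfold bS
    rw [Finset.sum_congr rfl (g := fun k => f (θ^[k] x) - b)
      (fun k _ => by rw [hφdef, indicator_of_mem ((hmem k x).mpr hx)])]
    rw [Finset.sum_sub_distrib]
    simp [mul_comm]
  have hSout : ∀ (n : ℕ) (x : Ω), x ∉ E → bS θ φ n x = 0 := by
    intro n x hx
    unfold bS
    rw [Finset.sum_congr rfl (g := fun _ => (0:ℝ))
      (fun k _ => by rw [hφdef, indicator_of_notMem (fun h => hx ((hmem k x).mp h))])]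
    simp
  set s : ℕ → Set Ω := fun N => {x | 0 < bM θ φ N x} with hsdef
  have hsm : ∀ N, MeasurableSet (s N) :=
    fun N => measurableSet_lt measurable_const (bM_measurable hθ hφm N)
  have hsmono : Monotone s := by
    intro N N' h x hx
    exact lt_of_lt_of_le hx (bM_mono θ φ h x)
  have hsub : (⋃ N, s N) = E := by
    ext x
    simp only [mem_iUnion, hsdef, mem_setOf_eq]
    constructor
    · rintro ⟨N, hN⟩
      by_contra hx
      rcases bM_eq_bS θ φ N x with h0 | ⟨k, _, _, hk3⟩
      · rw [h0] at hN; exact lt_irrefl 0 hN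
      · rw [hk3, hSout k x hx] at hN; exact lt_irrefl 0 hN
    · intro hx
      obtain ⟨n, hn1, hn2⟩ := hb x hx
      refine ⟨n, lt_of_lt_of_le ?_ (bS_le_bM θ φ hn1 le_rfl x)⟩
      rw [hSin n x hx]
      linarith
  have hφint : Integrable φ μ := integrable_of_bounded hφm hφbd
  have hA : ∀ N, 0 ≤ ∫ x in s N, φ x ∂μ :=
    fun N => maximal_ergodic hθ hpres hφm hφbd N
  have htend : Tendsto (fun N => ∫ x in s N, φ x ∂μ) atTop (𝓝 (∫ x in ⋃ N, s N, φ x ∂μ)) :=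
    tendsto_setIntegral_of_monotone hsm hsmono hφint.integrableOn
  have h0 : 0 ≤ ∫ x in ⋃ N, s N, φ x ∂μ := ge_of_tendsto' htend hA |>.trans_eq rfl
  rw [hsub] at h0
  have h1 : ∫ x in E, φ x ∂μ = ∫ x in E, (f x - b) ∂μ :=
    setIntegral_congr_fun hE (fun x hx => by rw [hφdef, indicator_of_mem hx])
  have h2 : ∫ x in E, (f x - b) ∂μ
      = (∫ x in E, f x ∂μ) - (μ E).toReal * b := by
    rw [integral_sub ((integrable_of_bounded hf hC).integrableOn)
      (integrable_const b).integrableOn, setIntegral_const, smul_eq_mul]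
    rfl
  rw [h1, h2] at h0
  linarith



lemma avg_measurable {θ : Ω → Ω} {f : Ω → ℝ} (hθ : Measurable θ) (hf : Measurable f) (n : ℕ) :
    Measurable (fun x => avg θ f n x) := by
  unfold avg
  exact (bS_measurable hθ hf n).const_mul _

lemma bS_neg (θ : Ω → Ω) (f : Ω → ℝ) (n : ℕ) (x : Ω) :
    bS θ (fun y => -f y) n x = -(bS θ f n x) := by
  simp [bS]

lemma avg_neg (θ : Ω → Ω) (f : Ω → ℝ) (n : ℕ) (x : Ω) :
    avg θ (fun y => -f y) n x = -(avg θ f n x) := by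
  simp [avg, bS_neg]

lemma bS_shift (θ : Ω → Ω) (f : Ω → ℝ) (n : ℕ) (x : Ω) :
    bS θ f n (θ x) = bS θ f n x + f (θ^[n] x) - f x := by
  have h1 := bS_succ' θ f n x
  have h2 : bS θ f (n+1) x = bS θ f n x + f (θ^[n] x) := Finset.sum_range_succ _ _
  linarith

lemma avg_shift_bound {θ : Ω → Ω} {f : Ω → ℝ} {C : ℝ} (hC : ∀ x, |f x| ≤ C)
    {n : ℕ} (hn : 1 ≤ n) (x : Ω) :
    |avg θ f n (θ x) - avg θ f n x| ≤ 2 * C / n := by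
  have hn0 : (0:ℝ) < n := by exact_mod_cast hn
  have : avg θ f n (θ x) - avg θ f n x = (1/(n:ℝ)) * (f (θ^[n] x) - f x) := by
    unfold avg
    rw [bS_shift]
    ring
  rw [this, abs_mul, abs_of_nonneg (by positivity : (0:ℝ) ≤ 1/(n:ℝ))]
  have habs : |f (θ^[n] x) - f x| ≤ 2 * C := by
    calc |f (θ^[n] x) - f x| ≤ |f (θ^[n] x)| + |f x| := abs_sub _ _
      _ ≤ 2 * C := by linarith [hC (θ^[n] x), hC x]
  calc (1/(n:ℝ)) * |f (θ^[n] x) - f x| ≤ (1/(n:ℝ)) * (2*C) := by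
        apply mul_le_mul_of_nonneg_left habs (by positivity)
    _ = 2 * C / n := by ring

/-- transfer of "frequently exceeds" along a vanishing perturbation -/
lemma freq_transfer {u v : ℕ → ℝ} {D : ℝ} (hD : 0 ≤ D)
    (hbd : ∀ n, 1 ≤ n → |u n - v n| ≤ D / n) {β β' : ℝ} (h : β < β')
    (hfreq : ∀ N, ∃ n ≥ N, β' < u n) : ∀ N, ∃ n ≥ N, β < v n := by
  intro N
  set ε := β' - β with hε
  have hε0 : 0 < ε := by simp [hε]; linarith
  set M := max N (Nat.ceil (D/ε) + 1) with hM
  obtain ⟨n, hn, hun⟩ := hfreq M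
  have hn1 : 1 ≤ n := le_trans (le_trans (Nat.le_add_left 1 _) (le_max_right N _)) hn
  have hnD : D / n < ε := by
    have hnQ : (D/ε : ℝ) < n := by
      have h1 : (Nat.ceil (D/ε) : ℝ) ≥ D/ε := Nat.le_ceil _
      have h2 : (Nat.ceil (D/ε) + 1 : ℕ) ≤ n := le_trans (le_max_right N _) hn
      have := (Nat.cast_le (α := ℝ)).mpr h2
      push_cast at this
      linarith
    have hn0 : (0:ℝ) < n := by exact_mod_cast hn1
    rw [div_lt_iff₀ hn0]
    rw [div_lt_iff₀ hε0] at hnQ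
    linarith [mul_comm ε (n:ℝ)]
  refine ⟨n, le_trans (le_max_left N _) hn, ?_⟩
  have := hbd n hn1
  have : v n ≥ u n - D/n := by
    have h' := abs_sub_le_iff.mp (hbd n hn1)
    linarith [h'.1]
  linarith

/-- the set where the Birkhoff averages frequently exceed some rational `b' > b` -/
def Hgt (θ : Ω → Ω) (f : Ω → ℝ) (b : ℚ) : Set Ω :=
  {ω | ∃ b' : ℚ, b < b' ∧ ∀ N, ∃ n ≥ N, (b' : ℝ) < avg θ f n ω}

lemma Hgt_meas {θ : Ω → Ω} {f : Ω → ℝ} (hθ : Measurable θ) (hf : Measurable f) (b : ℚ) :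
    MeasurableSet (Hgt θ f b) := by
  have : Hgt θ f b = ⋃ (b' : ℚ), ⋃ (_ : b < b'), ⋂ (N : ℕ), ⋃ (n : ℕ), ⋃ (_ : n ≥ N),
      {ω | (b' : ℝ) < avg θ f n ω} := by
    ext ω
    simp [Hgt]
  rw [this]
  refine MeasurableSet.iUnion fun b' => MeasurableSet.iUnion fun _ =>
    MeasurableSet.iInter fun N => MeasurableSet.iUnion fun n => MeasurableSet.iUnion fun _ =>
    measurableSet_lt measurable_const (avg_measurable hθ hf n)

lemma Hgt_inv {θ : Ω → Ω} {f : Ω → ℝ} {C : ℝ} (hC : ∀ x, |f x| ≤ C) (b : ℚ) :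
    θ ⁻¹' (Hgt θ f b) = Hgt θ f b := by
  ext x
  simp only [mem_preimage]
  have hC0 : ∀ (y : Ω), (0:ℝ) ≤ C := fun y => le_trans (abs_nonneg _) (hC y)
  constructor
  · rintro ⟨b', hb', hfreq⟩
    have hD0 : (0:ℝ) ≤ 2*C := by linarith [hC0 x]
    refine ⟨(b + b')/2, by linarith, ?_⟩
    have hmid : ((((b + b')/2 : ℚ)) : ℝ) < (b' : ℝ) := by
      push_cast
      have : (b:ℝ) < b' := by exact_mod_cast hb'
      linarith
    exact freq_transfer hD0
      (fun n hn => by simpa [div_eq_mul_inv] using avg_shift_bound hC hn x) hmid hfreq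
  · rintro ⟨b', hb', hfreq⟩
    have hD0 : (0:ℝ) ≤ 2*C := by linarith [hC0 x]
    refine ⟨(b + b')/2, by linarith, ?_⟩
    have hmid : ((((b + b')/2 : ℚ)) : ℝ) < (b' : ℝ) := by
      push_cast
      have : (b:ℝ) < b' := by exact_mod_cast hb'
      linarith
    refine freq_transfer hD0 (fun n hn => ?_) hmid hfreq
    rw [abs_sub_comm]
    simpa [div_eq_mul_inv] using avg_shift_bound hC hn x


def Hlt (θ : Ω → Ω) (f : Ω → ℝ) (a : ℚ) : Set Ω := Hgt θ (fun y => -f y) (-a)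

lemma mem_Hlt {θ : Ω → Ω} {f : Ω → ℝ} {a : ℚ} {x : Ω} :
    x ∈ Hlt θ f a ↔ ∃ a' : ℚ, a' < a ∧ ∀ N, ∃ n ≥ N, avg θ f n x < (a' : ℝ) := by
  unfold Hlt Hgt
  constructor
  · rintro ⟨b', hb', hfreq⟩
    refine ⟨-b', by linarith, fun N => ?_⟩
    obtain ⟨n, hn, h⟩ := hfreq N
    rw [avg_neg] at h
    exact ⟨n, hn, by push_cast; linarith⟩
  · rintro ⟨a', ha', hfreq⟩
    refine ⟨-a', by linarith, fun N => ?_⟩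
    obtain ⟨n, hn, h⟩ := hfreq N
    refine ⟨n, hn, ?_⟩
    rw [avg_neg]
    push_cast
    linarith

lemma Hlt_meas {θ : Ω → Ω} {f : Ω → ℝ} (hθ : Measurable θ) (hf : Measurable f) (a : ℚ) :
    MeasurableSet (Hlt θ f a) := Hgt_meas hθ hf.neg _

lemma Hlt_inv {θ : Ω → Ω} {f : Ω → ℝ} {C : ℝ} (hC : ∀ x, |f x| ≤ C) (a : ℚ) :
    θ ⁻¹' (Hlt θ f a) = Hlt θ f a :=
  Hgt_inv (f := fun y => -f y) (fun x => by simpa using hC x) _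

def Ebad (θ : Ω → Ω) (f : Ω → ℝ) (a b : ℚ) : Set Ω := Hlt θ f a ∩ Hgt θ f b

lemma Ebad_meas {θ : Ω → Ω} {f : Ω → ℝ} (hθ : Measurable θ) (hf : Measurable f) (a b : ℚ) :
    MeasurableSet (Ebad θ f a b) := (Hlt_meas hθ hf a).inter (Hgt_meas hθ hf b)

lemma Ebad_inv {θ : Ω → Ω} {f : Ω → ℝ} {C : ℝ} (hC : ∀ x, |f x| ≤ C) (a b : ℚ) :
    θ ⁻¹' (Ebad θ f a b) = Ebad θ f a b := by
  unfold Ebad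
  rw [preimage_inter, Hlt_inv hC, Hgt_inv hC]

lemma Ebad_null {θ : Ω → Ω} {f : Ω → ℝ} {μ : Measure Ω} [IsProbabilityMeasure μ]
    (hθ : Measurable θ) (hpres : MeasurePreserving θ μ μ) (hf : Measurable f)
    {C : ℝ} (hC : ∀ x, |f x| ≤ C) {a b : ℚ} (hab : a < b) :
    μ (Ebad θ f a b) = 0 := by
  set E := Ebad θ f a b with hEdef
  have hE : MeasurableSet E := Ebad_meas hθ hf a b
  have hinv : θ ⁻¹' E = E := Ebad_inv hC a b
  have hside1 : (b:ℝ) * (μ E).toReal ≤ ∫ x in E, f x ∂μ := by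
    refine lemmaB hθ hpres hf hC hE hinv (fun x hx => ?_)
    obtain ⟨b', hb', hfreq⟩ := hx.2
    obtain ⟨n, hn, hlt⟩ := hfreq 1
    have hn0 : (0:ℝ) < n := by exact_mod_cast hn
    refine ⟨n, hn, ?_⟩
    have hbS : bS θ f n x = n * avg θ f n x := by
      unfold avg; field_simp
    rw [hbS]
    have h1 : (b:ℝ) < b' := by exact_mod_cast hb'
    nlinarith
  have hside2 : (-(a:ℝ)) * (μ E).toReal ≤ ∫ x in E, -(f x) ∂μ := by
    have := lemmaB (f := fun y => -f y) hθ hpres hf.neg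
      (C := C) (fun x => by simpa using hC x) hE hinv (b := -(a:ℝ)) (fun x hx => ?_)
    · simpa using this
    · obtain ⟨a', ha', hfreq⟩ := mem_Hlt.mp hx.1
      obtain ⟨n, hn, hlt⟩ := hfreq 1
      have hn0 : (0:ℝ) < n := by exact_mod_cast hn
      refine ⟨n, hn, ?_⟩
      rw [bS_neg]
      have hbS : bS θ f n x = n * avg θ f n x := by
        unfold avg; field_simp
      rw [hbS]
      have h1 : (a':ℝ) < a := by exact_mod_cast ha'
      nlinarith
  have hneg : ∫ x in E, -(f x) ∂μ = -∫ x in E, f x ∂μ := integral_neg _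
  rw [hneg] at hside2
  have ht0 : (0:ℝ) ≤ (μ E).toReal := ENNReal.toReal_nonneg
  have hab' : (a:ℝ) < b := by exact_mod_cast hab
  have : (μ E).toReal = 0 := by nlinarith
  have hne : μ E ≠ ⊤ := measure_ne_top μ E
  exact (ENNReal.toReal_eq_zero_iff _).mp this |>.resolve_right hne

def BadSet (θ : Ω → Ω) (f : Ω → ℝ) : Set Ω :=
  ⋃ (p : ℚ × ℚ), ⋃ (_ : p.1 < p.2), Ebad θ f p.1 p.2

lemma BadSet_meas {θ : Ω → Ω} {f : Ω → ℝ} (hθ : Measurable θ) (hf : Measurable f) :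
    MeasurableSet (BadSet θ f) :=
  MeasurableSet.iUnion fun p => MeasurableSet.iUnion fun _ => Ebad_meas hθ hf p.1 p.2

lemma BadSet_inv {θ : Ω → Ω} {f : Ω → ℝ} {C : ℝ} (hC : ∀ x, |f x| ≤ C) :
    θ ⁻¹' (BadSet θ f) = BadSet θ f := by
  unfold BadSet
  rw [preimage_iUnion]
  refine iUnion_congr fun p => ?_
  rw [preimage_iUnion]
  exact iUnion_congr fun h => Ebad_inv hC p.1 p.2

lemma BadSet_null {θ : Ω → Ω} {f : Ω → ℝ} {μ : Measure Ω} [IsProbabilityMeasure μ]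
    (hθ : Measurable θ) (hpres : MeasurePreserving θ μ μ) (hf : Measurable f)
    {C : ℝ} (hC : ∀ x, |f x| ≤ C) :
    μ (BadSet θ f) = 0 :=
  measure_iUnion_null fun p => measure_iUnion_null fun h => Ebad_null hθ hpres hf hC h

lemma abs_avg_le {θ : Ω → Ω} {f : Ω → ℝ} {C : ℝ} (hC : ∀ x, |f x| ≤ C) (n : ℕ) (x : Ω) :
    |avg θ f n x| ≤ C := by
  have hC0 : 0 ≤ C := le_trans (abs_nonneg _) (hC x)
  rcases Nat.eq_zero_or_pos n with rfl | hn
  · simp [avg, bS_zero]; exact hC0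
  · have hn0 : (0:ℝ) < n := by exact_mod_cast hn
    unfold avg
    rw [abs_mul, abs_of_nonneg (by positivity : (0:ℝ) ≤ 1/(n:ℝ))]
    calc (1/(n:ℝ)) * |bS θ f n x| ≤ (1/(n:ℝ)) * (n * C) := by
          apply mul_le_mul_of_nonneg_left (abs_bS_le hC n x) (by positivity)
      _ = C := by field_simp

lemma not_bad_of_tendsto {θ : Ω → Ω} {f : Ω → ℝ} {x : Ω} {c : ℝ}
    (hc : Tendsto (fun n => avg θ f n x) atTop (𝓝 c)) : x ∉ BadSet θ f := by
  intro hx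
  simp only [BadSet, mem_iUnion] at hx
  obtain ⟨⟨a, b⟩, hab, hxE⟩ := hx
  obtain ⟨a', ha', hfa⟩ := mem_Hlt.mp hxE.1
  obtain ⟨b', hb', hfb⟩ := hxE.2
  -- b' ≤ c
  have h1 : (b':ℝ) ≤ c := by
    by_contra h
    push_neg at h
    have hev : ∀ᶠ n in atTop, avg θ f n x < (b':ℝ) := hc.eventually_lt_const h
    have hfr : ∃ᶠ n in atTop, (b':ℝ) < avg θ f n x := frequently_atTop.mpr hfb
    obtain ⟨n, h1, h2⟩ := (hfr.and_eventually hev).exists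
    linarith
  have h2 : c ≤ (a':ℝ) := by
    by_contra h
    push_neg at h
    have hev : ∀ᶠ n in atTop, (a':ℝ) < avg θ f n x := hc.eventually_const_lt h
    have hfr : ∃ᶠ n in atTop, avg θ f n x < (a':ℝ) := frequently_atTop.mpr hfa
    obtain ⟨n, h1, h2⟩ := (hfr.and_eventually hev).exists
    linarith
  have : (a':ℝ) < b' := by
    have c1 : (a':ℝ) < a := by exact_mod_cast ha'
    have c2 : (a:ℝ) < b := by exact_mod_cast hab
    have c3 : (b:ℝ) < b' := by exact_mod_cast hb'
    linarith
  linarith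

lemma tendsto_of_not_bad {θ : Ω → Ω} {f : Ω → ℝ} {C : ℝ} (hC : ∀ x, |f x| ≤ C) {x : Ω}
    (hx : x ∉ BadSet θ f) : ∃ c, Tendsto (fun n => avg θ f n x) atTop (𝓝 c) := by
  set u : ℕ → ℝ := fun n => avg θ f n x with hu
  have hub : ∀ n, |u n| ≤ C := fun n => abs_avg_le hC n x
  have hba : IsBoundedUnder (· ≤ ·) atTop u :=
    isBoundedUnder_of ⟨C, fun n => le_trans (le_abs_self _) (hub n)⟩
  have hbb : IsBoundedUnder (· ≥ ·) atTop u :=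
    isBoundedUnder_of ⟨-C, fun n => neg_le_of_abs_le (hub n)⟩
  set A := limsup u atTop with hA
  set B := liminf u atTop with hB
  have hBA : B ≤ A := liminf_le_limsup hba hbb
  rcases eq_or_lt_of_le hBA with hEq | hlt
  · exact ⟨A, tendsto_of_liminf_eq_limsup hEq rfl hba hbb⟩
  · exfalso
    apply hx
    obtain ⟨q1, hq1a, hq1b⟩ := exists_rat_btwn hlt
    obtain ⟨q2, hq2a, hq2b⟩ := exists_rat_btwn hq1a
    obtain ⟨q3, hq3a, hq3b⟩ := exists_rat_btwn hq2a
    obtain ⟨q4, hq4a, hq4b⟩ := exists_rat_btwn hq1b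
    -- B < q3 < q2 < q1 < q4 < A
    simp only [BadSet, mem_iUnion]
    refine ⟨(q2, q1), by exact_mod_cast hq2b, ?_, ?_⟩
    · -- x ∈ Hlt q2 : witness q3 < q2 and frequently u < q3
      refine mem_Hlt.mpr ⟨q3, by exact_mod_cast hq3b, ?_⟩
      have hfr : ∃ᶠ n in atTop, u n < (q3:ℝ) :=
        frequently_lt_of_liminf_lt hba.isCoboundedUnder_ge hq3a
      exact fun N => frequently_atTop.mp hfr N
    · -- x ∈ Hgt q1 : witness q4 > q1 and frequently u > q4
      refine ⟨q4, by exact_mod_cast hq4a, ?_⟩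
      have hfr : ∃ᶠ n in atTop, (q4:ℝ) < u n :=
        frequently_lt_of_lt_limsup hbb.isCoboundedUnder_le hq4b
      exact fun N => frequently_atTop.mp hfr N

lemma tendsto_shift_iff {θ : Ω → Ω} {f : Ω → ℝ} {C : ℝ} (hC : ∀ x, |f x| ≤ C) (x : Ω) (c : ℝ) :
    Tendsto (fun n => avg θ f n (θ x)) atTop (𝓝 c) ↔
      Tendsto (fun n => avg θ f n x) atTop (𝓝 c) := by
  have hd : Tendsto (fun n => avg θ f n (θ x) - avg θ f n x) atTop (𝓝 0) := by
    refine squeeze_zero_norm (a := fun n : ℕ => 2*C/(n:ℝ)) (fun n => ?_)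
      (tendsto_const_div_atTop_nhds_zero_nat (2*C))
    rcases Nat.eq_zero_or_pos n with rfl | hn
    · simp [avg, bS_zero]
    · exact avg_shift_bound hC hn x
  constructor
  · intro h
    have h2 := h.sub hd
    simp only [sub_sub_cancel, sub_zero] at h2
    exact h2
  · intro h
    have h2 := h.add hd
    simp only [add_sub_cancel, sub_zero, add_zero] at h2
    exact h2

def Cset (θ : Ω → Ω) (f : Ω → ℝ) (a b : ℝ) : Set Ω :=
  {ω | ∃ c, c ∈ Icc a b ∧ Tendsto (fun n => avg θ f n ω) atTop (𝓝 c)}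

lemma Cset_inv {θ : Ω → Ω} {f : Ω → ℝ} {C : ℝ} (hC : ∀ x, |f x| ≤ C) (a b : ℝ) :
    θ ⁻¹' (Cset θ f a b) = Cset θ f a b := by
  ext x
  simp only [mem_preimage, Cset, mem_setOf_eq]
  exact exists_congr fun c => and_congr_right fun _ => tendsto_shift_iff hC x c

lemma Cset_meas {θ : Ω → Ω} {f : Ω → ℝ} (hθ : Measurable θ) (hf : Measurable f)
    {C : ℝ} (hC : ∀ x, |f x| ≤ C) (a b : ℝ) : MeasurableSet (Cset θ f a b) := by
  have heq : Cset θ f a b = (BadSet θ f)ᶜ ∩ ⋂ (m : ℕ), ⋃ (N : ℕ), ⋂ (n : ℕ), ⋂ (_ : N ≤ n),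
      {ω | avg θ f n ω ∈ Icc (a - 1/(m+1)) (b + 1/(m+1))} := by
    ext x
    simp only [Cset, mem_setOf_eq, mem_inter_iff, mem_compl_iff, mem_iInter, mem_iUnion]
    constructor
    · rintro ⟨c, hc, ht⟩
      refine ⟨not_bad_of_tendsto ht, fun m => ?_⟩
      have hε : (0:ℝ) < 1/(m+1) := by positivity
      have hmem : Icc (c - 1/(m+1)) (c + 1/(m+1)) ∈ 𝓝 c :=
        Icc_mem_nhds (by linarith) (by linarith)
      obtain ⟨N, hN⟩ := eventually_atTop.mp (ht.eventually hmem)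
      refine ⟨N, fun n hn => ?_⟩
      have := hN n hn
      exact ⟨by linarith [this.1, hc.1], by linarith [this.2, hc.2]⟩
    · rintro ⟨hnb, hD⟩
      obtain ⟨c, ht⟩ := tendsto_of_not_bad hC hnb
      refine ⟨c, ⟨?_, ?_⟩, ht⟩
      · by_contra h
        push_neg at h
        obtain ⟨m, hm⟩ := exists_nat_one_div_lt (by linarith : (0:ℝ) < a - c)
        obtain ⟨N, hN⟩ := hD m
        have : a - 1/(m+1) ≤ c :=
          ge_of_tendsto ht (eventually_atTop.mpr ⟨N, fun n hn => (hN n hn).1⟩)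
        push_cast at hm this
        linarith
      · by_contra h
        push_neg at h
        obtain ⟨m, hm⟩ := exists_nat_one_div_lt (by linarith : (0:ℝ) < c - b)
        obtain ⟨N, hN⟩ := hD m
        have : c ≤ b + 1/(m+1) :=
          le_of_tendsto ht (eventually_atTop.mpr ⟨N, fun n hn => (hN n hn).2⟩)
        push_cast at hm this
        linarith
  rw [heq]
  refine ((BadSet_meas hθ hf).compl).inter ?_
  refine MeasurableSet.iInter fun m => MeasurableSet.iUnion fun N =>
    MeasurableSet.iInter fun n => MeasurableSet.iInter fun _ => ?_
  exact (avg_measurable hθ hf n) measurableSet_Icc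

lemma Cset_compl_eq_bad {θ : Ω → Ω} {f : Ω → ℝ} {C : ℝ} (hC : ∀ x, |f x| ≤ C) :
    (Cset θ f (-C) C)ᶜ = BadSet θ f := by
  have : Cset θ f (-C) C = (BadSet θ f)ᶜ := by
    ext x
    simp only [Cset, mem_setOf_eq, mem_compl_iff]
    constructor
    · rintro ⟨c, _, ht⟩
      exact not_bad_of_tendsto ht
    · intro hnb
      obtain ⟨c, ht⟩ := tendsto_of_not_bad hC hnb
      refine ⟨c, ⟨?_, ?_⟩, ht⟩
      · exact ge_of_tendsto ht (Filter.Eventually.of_forall fun n =>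
          neg_le_of_abs_le (abs_avg_le hC n x))
      · exact le_of_tendsto ht (Filter.Eventually.of_forall fun n =>
          le_trans (le_abs_self _) (abs_avg_le hC n x))
  rw [this, compl_compl]

lemma Cset_mono {θ : Ω → Ω} {f : Ω → ℝ} {a b a' b' : ℝ} (ha : a ≤ a') (hb : b' ≤ b) :
    Cset θ f a' b' ⊆ Cset θ f a b := by
  rintro x ⟨c, hc, ht⟩
  exact ⟨c, ⟨le_trans ha hc.1, le_trans hc.2 hb⟩, ht⟩

lemma Cset_split {θ : Ω → Ω} {f : Ω → ℝ} {a b m : ℝ} (hm : a ≤ m) (hm' : m ≤ b) :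
    Cset θ f a b ⊆ Cset θ f a m ∪ Cset θ f m b := by
  rintro x ⟨c, hc, ht⟩
  rcases le_total c m with h | h
  · exact Or.inl ⟨c, ⟨hc.1, h⟩, ht⟩
  · exact Or.inr ⟨c, ⟨h, hc.2⟩, ht⟩

end Stmt16Aux

section VQ
variable {Ω : Type*} [MeasurableSpace Ω]

lemma finadd_nonneg {P : Set Ω → ℝ} (hP : IsFinAddProb P) {A : Set Ω} (hA : MeasurableSet A) :
    0 ≤ P A := (hP.2.2.1 A hA).1

lemma finadd_mono {P : Set Ω → ℝ} (hP : IsFinAddProb P) {A B : Set Ω}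
    (hA : MeasurableSet A) (hB : MeasurableSet B) (hAB : A ⊆ B) : P A ≤ P B := by
  have hBA : B = A ∪ (B \ A) := by rw [Set.union_diff_cancel hAB]
  have := hP.2.2.2 A (B \ A) hA (hB.diff hA) disjoint_sdiff_self_right
  rw [← hBA] at this
  have h0 := finadd_nonneg hP (hB.diff hA)
  linarith

lemma finadd_compl {P : Set Ω → ℝ} (hP : IsFinAddProb P) {A : Set Ω} (hA : MeasurableSet A) :
    P Aᶜ = 1 - P A := by
  have := hP.2.2.2 A Aᶜ hA hA.compl disjoint_compl_right
  rw [Set.union_compl_self, hP.2.1] at this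
  linarith

variable {𝒮 : Set (Set Ω → ℝ)} {V : Set Ω → ℝ}

lemma V_bdd (hP : ∀ P ∈ 𝒮, IsFinAddProb P) {A : Set Ω} (hA : MeasurableSet A) :
    BddAbove ((fun P => P A) '' 𝒮) := by
  refine ⟨1, ?_⟩
  rintro y ⟨P, hPm, rfl⟩
  exact ((hP P hPm).2.2.1 A hA).2

lemma le_V (hV : UpperProbOf 𝒮 V) (hP : ∀ P ∈ 𝒮, IsFinAddProb P)
    {P : Set Ω → ℝ} (hPm : P ∈ 𝒮) {A : Set Ω} (hA : MeasurableSet A) : P A ≤ V A := by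
  rw [hV A hA]
  exact le_csSup (V_bdd hP hA) ⟨P, hPm, rfl⟩

lemma V_nonneg (hV : UpperProbOf 𝒮 V) (h𝒮 : 𝒮.Nonempty) (hP : ∀ P ∈ 𝒮, IsFinAddProb P)
    {A : Set Ω} (hA : MeasurableSet A) : 0 ≤ V A := by
  obtain ⟨P, hPm⟩ := h𝒮
  exact le_trans (finadd_nonneg (hP P hPm) hA) (le_V hV hP hPm hA)

lemma V_const (hV : UpperProbOf 𝒮 V) (h𝒮 : 𝒮.Nonempty) {A : Set Ω} (hA : MeasurableSet A)
    {r : ℝ} (hr : ∀ P ∈ 𝒮, P A = r) : V A = r := by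
  rw [hV A hA]
  have : (fun P => P A) '' 𝒮 = {r} := by
    apply Set.eq_singleton_iff_nonempty_unique_mem.mpr
    exact ⟨h𝒮.image _, by rintro y ⟨P, hPm, rfl⟩; exact hr P hPm⟩
  rw [this, csSup_singleton]

lemma V_empty (hV : UpperProbOf 𝒮 V) (h𝒮 : 𝒮.Nonempty) (hP : ∀ P ∈ 𝒮, IsFinAddProb P) :
    V ∅ = 0 :=
  V_const hV h𝒮 MeasurableSet.empty (fun P hPm => (hP P hPm).1)

lemma V_univ (hV : UpperProbOf 𝒮 V) (h𝒮 : 𝒮.Nonempty) (hP : ∀ P ∈ 𝒮, IsFinAddProb P) :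
    V Set.univ = 1 :=
  V_const hV h𝒮 MeasurableSet.univ (fun P hPm => (hP P hPm).2.1)

lemma V_mono (hV : UpperProbOf 𝒮 V) (h𝒮 : 𝒮.Nonempty) (hP : ∀ P ∈ 𝒮, IsFinAddProb P)
    {A B : Set Ω} (hA : MeasurableSet A) (hB : MeasurableSet B) (hAB : A ⊆ B) : V A ≤ V B := by
  rw [hV A hA]
  apply csSup_le (h𝒮.image _)
  rintro y ⟨P, hPm, rfl⟩
  exact le_trans (finadd_mono (hP P hPm) hA hB hAB) (le_V hV hP hPm hB)

lemma V_subadd (hV : UpperProbOf 𝒮 V) (h𝒮 : 𝒮.Nonempty) (hP : ∀ P ∈ 𝒮, IsFinAddProb P)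
    {A B : Set Ω} (hA : MeasurableSet A) (hB : MeasurableSet B) : V (A ∪ B) ≤ V A + V B := by
  rw [hV (A ∪ B) (hA.union hB)]
  apply csSup_le (h𝒮.image _)
  rintro y ⟨P, hPm, rfl⟩
  have hsplit : A ∪ B = A ∪ (B \ A) := by rw [Set.union_diff_self]
  have hadd := (hP P hPm).2.2.2 A (B \ A) hA (hB.diff hA) disjoint_sdiff_self_right
  show P (A ∪ B) ≤ V A + V B
  rw [hsplit, hadd]
  have h1 : P A ≤ V A := le_V hV hP hPm hA
  have h2 : P (B \ A) ≤ V B :=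
    le_trans (finadd_mono (hP P hPm) (hB.diff hA) hB Set.diff_subset) (le_V hV hP hPm hB)
  linarith

lemma V_zero_iff (hV : UpperProbOf 𝒮 V) (h𝒮 : 𝒮.Nonempty) (hP : ∀ P ∈ 𝒮, IsFinAddProb P)
    {A : Set Ω} (hA : MeasurableSet A) : V A = 0 ↔ ∀ P ∈ 𝒮, P A = 0 := by
  constructor
  · intro h P hPm
    have h1 := le_V hV hP hPm hA
    have h2 := finadd_nonneg (hP P hPm) hA
    linarith [h ▸ h1]
  · intro h
    exact V_const hV h𝒮 hA h

lemma V_one_of_compl_zero (hV : UpperProbOf 𝒮 V) (h𝒮 : 𝒮.Nonempty)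
    (hP : ∀ P ∈ 𝒮, IsFinAddProb P) {B : Set Ω} (hB : MeasurableSet B)
    (h : V Bᶜ = 0) : V B = 1 := by
  refine V_const hV h𝒮 hB (fun P hPm => ?_)
  have h1 := (V_zero_iff hV h𝒮 hP hB.compl).mp h P hPm
  have h2 := finadd_compl (hP P hPm) hB
  linarith

end VQ

section QConstr
open Filter Topology Set
variable {Ω : Type*} [MeasurableSpace Ω]

noncomputable def cesaro (θ : Ω → Ω) (P₀ : Set Ω → ℝ) (n : ℕ) (A : Set Ω) : ℝ :=
  (1/(n:ℝ)) * ∑ k ∈ Finset.range n, P₀ (θ^[k] ⁻¹' A)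

lemma V_iterate {𝒮 : Set (Set Ω → ℝ)} {V : Set Ω → ℝ} {θ : Ω → Ω} (hθ : Measurable θ)
    (hpres : PreservesCap V θ) {A : Set Ω} (hA : MeasurableSet A) (k : ℕ) :
    V (θ^[k] ⁻¹' A) = V A := by
  induction k with
  | zero => simp
  | succ k ih =>
    have : θ^[k+1] ⁻¹' A = θ ⁻¹' (θ^[k] ⁻¹' A) := by
      rw [Function.iterate_succ, Set.preimage_comp]
    rw [this, hpres _ ((hθ.iterate k) hA), ih]

lemma exists_Q {𝒮 : Set (Set Ω → ℝ)} (h𝒮 : 𝒮.Nonempty) (hP : ∀ P ∈ 𝒮, IsFinAddProb P)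
    {V : Set Ω → ℝ} (hV : UpperProbOf 𝒮 V) {θ : Ω → Ω} (hθ : Measurable θ)
    (hpres : PreservesCap V θ) :
    ∃ Q : Set Ω → ℝ,
      (∀ A, MeasurableSet A → 0 ≤ Q A) ∧ (∀ A, MeasurableSet A → Q A ≤ V A) ∧
      Q Set.univ = 1 ∧ Q ∅ = 0 ∧
      (∀ A B, MeasurableSet A → MeasurableSet B → Disjoint A B → Q (A ∪ B) = Q A + Q B) ∧
      (∀ A, MeasurableSet A → Q (θ ⁻¹' A) = Q A) := by
  classical
  obtain ⟨P₀, hP₀m⟩ := h𝒮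
  have hP₀ := hP P₀ hP₀m
  set U : Ultrafilter ℕ := Ultrafilter.of atTop with hU
  have hUle : (U : Filter ℕ) ≤ atTop := Ultrafilter.of_le _
  -- basic membership facts
  have hmem : ∀ (A : Set Ω), MeasurableSet A → ∀ n, cesaro θ P₀ n A ∈ Icc (0:ℝ) 1 := by
    intro A hA n
    rcases Nat.eq_zero_or_pos n with rfl | hn
    · simp [cesaro]
    have hn0 : (0:ℝ) < n := by exact_mod_cast hn
    have hterm : ∀ k, P₀ (θ^[k] ⁻¹' A) ∈ Icc (0:ℝ) 1 := by
      intro k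
      have := hP₀.2.2.1 (θ^[k] ⁻¹' A) ((hθ.iterate k) hA)
      exact ⟨this.1, this.2⟩
    constructor
    · apply mul_nonneg (by positivity)
      exact Finset.sum_nonneg fun k _ => (hterm k).1
    · have hs : ∑ k ∈ Finset.range n, P₀ (θ^[k] ⁻¹' A) ≤ n := by
        calc ∑ k ∈ Finset.range n, P₀ (θ^[k] ⁻¹' A) ≤ ∑ _k ∈ Finset.range n, (1:ℝ) :=
              Finset.sum_le_sum fun k _ => (hterm k).2
          _ = n := by simp
      unfold cesaro
      rw [one_div, inv_mul_le_iff₀ hn0, mul_one]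
      exact hs
  -- existence of ultrafilter limits
  have hexists : ∀ A : Set Ω, ∃ c : ℝ,
      MeasurableSet A → Tendsto (fun n => cesaro θ P₀ n A) ↑U (𝓝 c) := by
    intro A
    by_cases hA : MeasurableSet A
    · have hle : ↑(U.map (fun n => cesaro θ P₀ n A)) ≤ 𝓟 (Icc (0:ℝ) 1) := by
        rw [Ultrafilter.coe_map, Filter.le_principal_iff, Filter.mem_map]
        exact Filter.Eventually.of_forall (fun n => hmem A hA n)
      obtain ⟨c, _, hc⟩ := (isCompact_Icc (a := (0:ℝ)) (b := 1)).ultrafilter_le_nhds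
        (U.map (fun n => cesaro θ P₀ n A)) hle
      refine ⟨c, fun _ => ?_⟩
      rwa [Ultrafilter.coe_map] at hc
    · exact ⟨0, fun h => absurd h hA⟩
  choose Q hQ using hexists
  have key : ∀ A : Set Ω, MeasurableSet A →
      Tendsto (fun n => cesaro θ P₀ n A) ↑U (𝓝 (Q A)) := fun A hA => hQ A hA
  refine ⟨Q, ?_, ?_, ?_, ?_, ?_, ?_⟩
  · -- nonneg
    intro A hA
    exact ge_of_tendsto (key A hA) (Filter.Eventually.of_forall fun n => (hmem A hA n).1)
  · -- ≤ V
    intro A hA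
    have hces : ∀ n, cesaro θ P₀ n A ≤ V A := by
      intro n
      rcases Nat.eq_zero_or_pos n with rfl | hn
      · simpa [cesaro] using V_nonneg hV ⟨P₀, hP₀m⟩ hP hA
      have hn0 : (0:ℝ) < n := by exact_mod_cast hn
      have hs : ∑ k ∈ Finset.range n, P₀ (θ^[k] ⁻¹' A) ≤ n * V A := by
        calc ∑ k ∈ Finset.range n, P₀ (θ^[k] ⁻¹' A)
            ≤ ∑ _k ∈ Finset.range n, V A := by
              refine Finset.sum_le_sum fun k _ => ?_
              calc P₀ (θ^[k] ⁻¹' A) ≤ V (θ^[k] ⁻¹' A) := le_V hV hP hP₀m ((hθ.iterate k) hA)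
                _ = V A := V_iterate (𝒮 := 𝒮) hθ hpres hA k
          _ = n * V A := by rw [Finset.sum_const, Finset.card_range, nsmul_eq_mul]
      unfold cesaro
      rw [one_div, inv_mul_le_iff₀ hn0]
      linarith [hs]
    exact le_of_tendsto (key A hA) (Filter.Eventually.of_forall hces)
  · -- univ
    have hev : ∀ᶠ n in (U : Filter ℕ), cesaro θ P₀ n Set.univ = 1 := by
      apply hUle
      filter_upwards [Filter.eventually_ge_atTop 1] with n hn
      have hn0 : (0:ℝ) < n := by exact_mod_cast hn
      unfold cesaro
      simp only [Set.preimage_univ, hP₀.2.1]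
      rw [Finset.sum_const, Finset.card_range]
      rw [nsmul_eq_mul, mul_one]
      field_simp
    have : Tendsto (fun n => cesaro θ P₀ n Set.univ) ↑U (𝓝 1) :=
      Tendsto.congr' (Filter.EventuallyEq.symm hev) tendsto_const_nhds
    exact tendsto_nhds_unique (key _ MeasurableSet.univ) this
  · -- empty
    have : Tendsto (fun n => cesaro θ P₀ n (∅ : Set Ω)) ↑U (𝓝 0) := by
      have : ∀ n, cesaro θ P₀ n (∅ : Set Ω) = 0 := by
        intro n
        unfold cesaro
        simp [hP₀.1]
      simpa [this] using tendsto_const_nhds (α := ℝ) (f := (U : Filter ℕ))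
    exact tendsto_nhds_unique (key _ MeasurableSet.empty) this
  · -- additivity
    intro A B hA hB hAB
    have hsum : ∀ n, cesaro θ P₀ n (A ∪ B) = cesaro θ P₀ n A + cesaro θ P₀ n B := by
      intro n
      unfold cesaro
      rw [← mul_add, ← Finset.sum_add_distrib]
      congr 1
      refine Finset.sum_congr rfl fun k _ => ?_
      rw [Set.preimage_union]
      exact hP₀.2.2.2 _ _ ((hθ.iterate k) hA) ((hθ.iterate k) hB) (hAB.preimage _)
    have : Tendsto (fun n => cesaro θ P₀ n (A ∪ B)) ↑U (𝓝 (Q A + Q B)) := by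
      rw [show (fun n => cesaro θ P₀ n (A ∪ B)) = fun n => cesaro θ P₀ n A + cesaro θ P₀ n B
        from funext hsum]
      exact (key A hA).add (key B hB)
    exact tendsto_nhds_unique (key _ (hA.union hB)) this
  · -- shift invariance
    intro A hA
    have hshift : ∀ n : ℕ, 1 ≤ n →
        |cesaro θ P₀ n (θ ⁻¹' A) - cesaro θ P₀ n A| ≤ 2 / n := by
      intro n hn
      have hn0 : (0:ℝ) < n := by exact_mod_cast hn
      set g : ℕ → ℝ := fun k => P₀ (θ^[k] ⁻¹' A) with hg
      have hpre : ∀ k, θ^[k] ⁻¹' (θ ⁻¹' A) = θ^[k+1] ⁻¹' A := by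
        intro k
        rw [Function.iterate_succ', Set.preimage_comp]
      have h1 : cesaro θ P₀ n (θ ⁻¹' A) = (1/(n:ℝ)) * ∑ k ∈ Finset.range n, g (k+1) := by
        unfold cesaro
        congr 1
        exact Finset.sum_congr rfl fun k _ => by rw [hpre k]
      have h2 : ∑ k ∈ Finset.range n, g (k+1) = (∑ k ∈ Finset.range n, g k) + g n - g 0 := by
        have := Finset.sum_range_succ' g n
        have h3 := Finset.sum_range_succ g n
        -- sum_range_succ' : ∑ i in range (n+1), g i = (∑ i in range n, g (i+1)) + g 0
        linarith
      have hgk : ∀ k, g k ∈ Icc (0:ℝ) 1 := by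
        intro k
        have := hP₀.2.2.1 (θ^[k] ⁻¹' A) ((hθ.iterate k) hA)
        exact ⟨this.1, this.2⟩
      rw [h1, h2]
      have : (1/(n:ℝ)) * ((∑ k ∈ Finset.range n, g k) + g n - g 0) - cesaro θ P₀ n A
          = (1/(n:ℝ)) * (g n - g 0) := by
        unfold cesaro
        ring
      rw [this, abs_mul, abs_of_nonneg (by positivity : (0:ℝ) ≤ 1/(n:ℝ))]
      have : |g n - g 0| ≤ 2 := by
        have h1 := hgk n
        have h2 := hgk 0
        rw [abs_le]
        constructor <;> [linarith [h1.1, h2.2]; linarith [h1.2, h2.1]]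
      calc (1/(n:ℝ)) * |g n - g 0| ≤ (1/(n:ℝ)) * 2 := by
            apply mul_le_mul_of_nonneg_left this (by positivity)
        _ = 2 / n := by ring
    have hδ : Tendsto (fun n : ℕ => cesaro θ P₀ n (θ ⁻¹' A) - cesaro θ P₀ n A) atTop (𝓝 0) := by
      refine squeeze_zero_norm (a := fun n : ℕ => 2 / (n:ℝ)) (fun n => ?_)
        (tendsto_const_div_atTop_nhds_zero_nat 2)
      rcases Nat.eq_zero_or_pos n with rfl | hn
      · simp [cesaro]
      · exact hshift n hn
    have : Tendsto (fun n => cesaro θ P₀ n (θ ⁻¹' A)) ↑U (𝓝 (Q A)) := by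
      have h1 : Tendsto (fun n : ℕ => cesaro θ P₀ n A
          + (cesaro θ P₀ n (θ ⁻¹' A) - cesaro θ P₀ n A)) ↑U (𝓝 (Q A + 0)) :=
        (key A hA).add (hδ.mono_left hUle)
      simpa using h1
    exact tendsto_nhds_unique (key _ (hθ hA)) this

end QConstr

section MeasConstr
open Filter Topology Set
variable {Ω : Type*} [MeasurableSpace Ω]

lemma exists_measure {V Q : Set Ω → ℝ}
    (hQ0 : ∀ A, MeasurableSet A → 0 ≤ Q A)
    (hQV : ∀ A, MeasurableSet A → Q A ≤ V A)
    (hQu : Q Set.univ = 1) (hQe : Q ∅ = 0)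
    (hQadd : ∀ A B, MeasurableSet A → MeasurableSet B → Disjoint A B →
      Q (A ∪ B) = Q A + Q B)
    {θ : Ω → Ω} (hQθ : ∀ A, MeasurableSet A → Q (θ ⁻¹' A) = Q A)
    (hVe : V ∅ = 0) (hVa : ContAbove V) (hθ : Measurable θ) :
    ∃ μ : Measure Ω, IsProbabilityMeasure μ ∧ MeasurePreserving θ μ μ ∧
      ∀ A, MeasurableSet A → μ A = ENNReal.ofReal (Q A) := by
  classical
  have hQcont : ∀ (A : ℕ → Set Ω), (∀ n, MeasurableSet (A n)) → Antitone A →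
      (⋂ n, A n) = ∅ → Tendsto (fun n => Q (A n)) atTop (𝓝 0) := by
    intro A hA hanti hempty
    have hV0 : Tendsto (fun n => V (A n)) atTop (𝓝 0) := by
      have := hVa A hA hanti
      rwa [hempty, hVe] at this
    exact tendsto_of_tendsto_of_tendsto_of_le_of_le tendsto_const_nhds hV0
      (fun n => hQ0 _ (hA n)) (fun n => hQV _ (hA n))
  -- countable additivity
  have hCA : ∀ (g : ℕ → Set Ω), (∀ i, MeasurableSet (g i)) → Pairwise (Function.onFun Disjoint g) →
      ENNReal.ofReal (Q (⋃ i, g i)) = ∑' i, ENNReal.ofReal (Q (g i)) := by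
    intro g hg hdis
    set Bn : ℕ → Set Ω := fun n => ⋃ i, ⋃ (_ : i < n), g i with hBn
    set Tn : ℕ → Set Ω := fun n => ⋃ i, ⋃ (_ : n ≤ i), g i with hTn
    have hBm : ∀ n, MeasurableSet (Bn n) :=
      fun n => MeasurableSet.iUnion fun i => MeasurableSet.iUnion fun _ => hg i
    have hTm : ∀ n, MeasurableSet (Tn n) :=
      fun n => MeasurableSet.iUnion fun i => MeasurableSet.iUnion fun _ => hg i
    have hQB : ∀ n, Q (Bn n) = ∑ i ∈ Finset.range n, Q (g i) := by
      intro n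
      induction n with
      | zero =>
        have : Bn 0 = ∅ := by simp [hBn]
        simp [this, hQe]
      | succ n ih =>
        have hsplit : Bn (n+1) = Bn n ∪ g n := by
          simp only [hBn]
          ext x
          simp only [mem_iUnion, mem_union]
          constructor
          · rintro ⟨i, hi, hx⟩
            rcases Nat.lt_or_ge i n with h | h
            · exact Or.inl ⟨i, h, hx⟩
            · have : i = n := by omega
              exact Or.inr (this ▸ hx)
          · rintro (⟨i, hi, hx⟩ | hx)
            · exact ⟨i, by omega, hx⟩
            · exact ⟨n, by omega, hx⟩
        have hdisj : Disjoint (Bn n) (g n) := by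
          rw [Set.disjoint_left]
          intro x hx hxn
          simp only [hBn, mem_iUnion] at hx
          obtain ⟨i, hi, hx⟩ := hx
          exact Set.disjoint_left.mp (hdis (Nat.ne_of_lt hi)) hx hxn
        rw [hsplit, hQadd _ _ (hBm n) (hg n) hdisj, ih, Finset.sum_range_succ]
    have hsplitU : ∀ n, (⋃ i, g i) = Bn n ∪ Tn n := by
      intro n
      ext x
      simp only [hBn, hTn, mem_iUnion, mem_union]
      constructor
      · rintro ⟨i, hx⟩
        rcases Nat.lt_or_ge i n with h | h
        · exact Or.inl ⟨i, h, hx⟩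
        · exact Or.inr ⟨i, h, hx⟩
      · rintro (⟨i, _, hx⟩ | ⟨i, _, hx⟩) <;> exact ⟨i, hx⟩
    have hdisjBT : ∀ n, Disjoint (Bn n) (Tn n) := by
      intro n
      rw [Set.disjoint_left]
      intro x hx hx'
      simp only [hBn, hTn, mem_iUnion] at hx hx'
      obtain ⟨i, hi, hx⟩ := hx
      obtain ⟨j, hj, hx'⟩ := hx'
      exact Set.disjoint_left.mp (hdis (by omega : i ≠ j)) hx hx'
    have hTanti : Antitone Tn := by
      intro n m hnm x hx
      simp only [hTn, mem_iUnion] at hx ⊢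
      obtain ⟨i, hi, hx⟩ := hx
      exact ⟨i, by omega, hx⟩
    have hTempty : (⋂ n, Tn n) = ∅ := by
      ext x
      simp only [mem_iInter, hTn, mem_iUnion, mem_empty_iff_false, iff_false]
      intro h
      obtain ⟨i, _, hxi⟩ := h 0
      obtain ⟨j, hj, hxj⟩ := h (i+1)
      exact Set.disjoint_left.mp (hdis (by omega : i ≠ j)) hxi hxj
    have hT0 : Tendsto (fun n => Q (Tn n)) atTop (𝓝 0) := hQcont Tn hTm hTanti hTempty
    have hsum : ∀ n, Q (⋃ i, g i) = Q (Bn n) + Q (Tn n) := by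
      intro n
      rw [hsplitU n]
      exact hQadd _ _ (hBm n) (hTm n) (hdisjBT n)
    have htend : Tendsto (fun n => ∑ i ∈ Finset.range n, Q (g i)) atTop (𝓝 (Q (⋃ i, g i))) := by
      have : (fun n => ∑ i ∈ Finset.range n, Q (g i))
          = fun n => Q (⋃ i, g i) - Q (Tn n) := by
        funext n
        rw [← hQB n]
        linarith [hsum n]
      rw [this]
      simpa using tendsto_const_nhds.sub hT0
    have hs : HasSum (fun i => Q (g i)) (Q (⋃ i, g i)) :=
      (hasSum_iff_tendsto_nat_of_nonneg (fun i => hQ0 _ (hg i)) _).mpr htend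
    rw [← hs.tsum_eq, ENNReal.ofReal_tsum_of_nonneg (fun i => hQ0 _ (hg i)) hs.summable]
  set μ : Measure Ω := Measure.ofMeasurable (fun s _ => ENNReal.ofReal (Q s))
    (by simp [hQe]) (fun g hg hdis => hCA g hg hdis) with hμ
  have happly : ∀ A : Set Ω, MeasurableSet A → μ A = ENNReal.ofReal (Q A) :=
    fun A hA => Measure.ofMeasurable_apply A hA
  refine ⟨μ, ⟨?_⟩, ⟨hθ, ?_⟩, happly⟩
  · rw [happly _ MeasurableSet.univ, hQu]
    simp
  · refine Measure.ext fun s hs => ?_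
    rw [Measure.map_apply hθ hs, happly _ (hθ hs), happly _ hs, hQθ s hs]
end MeasConstr


open Stmt16Aux

theorem stmt16 {Ω : Type*} [MeasurableSpace Ω]
    (𝒮 : Set (Set Ω → ℝ)) (h𝒮 : 𝒮.Nonempty) (hP : ∀ P ∈ 𝒮, IsFinAddProb P)
    (V v : Set Ω → ℝ) (hV : UpperProbOf 𝒮 V) (hv : LowerProbOf 𝒮 v)
    (hVb : ContBelow V) (hVa : ContAbove V) (hvb : ContBelow v) (hva : ContAbove v)
    (θ : Ω → Ω) (hθ : Measurable θ) (hpres : PreservesCap V θ) :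
    ErgodicCap V θ ↔
      ∀ ξ : Ω → ℝ, Measurable ξ → (∃ M : ℝ, ∀ ω, |ξ ω| ≤ M) →
        ∃ c : ℝ,
          V {ω | ¬ Filter.Tendsto
            (fun n : ℕ => (1 / (n : ℝ)) * ∑ k ∈ Finset.range n, ξ (θ^[k] ω))
            Filter.atTop (nhds c)} = 0 := by
  classical
  constructor
  · -- ergodic → Birkhoff convergence quasi-surely
    rintro hErg ξ hξ ⟨M0, hM0⟩
    set C : ℝ := max M0 0 with hCdef
    have hC : ∀ ω, |ξ ω| ≤ C := fun ω => le_trans (hM0 ω) (le_max_left _ _)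
    have hC0 : (0:ℝ) ≤ C := le_max_right _ _
    obtain ⟨Q, hQ0, hQV, hQu, hQe, hQadd, hQθ⟩ := exists_Q h𝒮 hP hV hθ hpres
    obtain ⟨μ, hprob, hmp, happly⟩ :=
      exists_measure hQ0 hQV hQu hQe hQadd hQθ (V_empty hV h𝒮 hP) hVa hθ
    haveI := hprob
    have hμBad : μ (BadSet θ ξ) = 0 := BadSet_null hθ hmp hξ hC
    have hBadMeas : MeasurableSet (BadSet θ ξ) := BadSet_meas hθ hξ
    have hBadInv : θ ⁻¹' (BadSet θ ξ) = BadSet θ ξ := BadSet_inv hC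
    have hQBad : Q (BadSet θ ξ) = 0 := by
      have h1 := happly _ hBadMeas
      rw [hμBad] at h1
      have h2 : Q (BadSet θ ξ) ≤ 0 := ENNReal.ofReal_eq_zero.mp h1.symm
      exact le_antisymm h2 (hQ0 _ hBadMeas)
    have hVBad : V (BadSet θ ξ) = 0 := by
      rcases (hErg _ hBadMeas hBadInv).2 with h | h
      · exact h
      · exfalso
        have hQc : Q (BadSet θ ξ)ᶜ = 0 :=
          le_antisymm (le_trans (hQV _ hBadMeas.compl) (le_of_eq h)) (hQ0 _ hBadMeas.compl)
        have huniv := hQadd _ _ hBadMeas hBadMeas.compl disjoint_compl_right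
        rw [Set.union_compl_self, hQu, hQBad, hQc] at huniv
        norm_num at huniv
    -- bisection
    set Pred : ℝ × ℝ → Prop := fun p => p.1 ≤ p.2 ∧ V ((Cset θ ξ p.1 p.2)ᶜ) = 0 with hPred
    have hbase : Pred (-C, C) := by
      refine ⟨show -C ≤ C by linarith, ?_⟩
      rw [show ((Cset θ ξ (-C) C)ᶜ) = BadSet θ ξ from Cset_compl_eq_bad hC]
      exact hVBad
    have hstep : ∀ p : ℝ × ℝ, Pred p →
        Pred (p.1, (p.1+p.2)/2) ∨ Pred ((p.1+p.2)/2, p.2) := by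
      rintro ⟨a, b⟩ ⟨hab, hV0⟩
      simp only at hab hV0
      set m : ℝ := (a+b)/2 with hm
      have hm1 : a ≤ m := by rw [hm]; linarith
      have hm2 : m ≤ b := by rw [hm]; linarith
      have hmeas1 : MeasurableSet (Cset θ ξ a m) := Cset_meas hθ hξ hC a m
      rcases (hErg _ hmeas1 (Cset_inv hC a m)).2 with h | h
      · right
        refine ⟨hm2, ?_⟩
        have hsub : (Cset θ ξ m b)ᶜ ⊆ (Cset θ ξ a b)ᶜ ∪ Cset θ ξ a m := by
          intro x hx
          by_cases hxa : x ∈ Cset θ ξ a b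
          · rcases Cset_split hm1 hm2 hxa with h1 | h1
            · exact Or.inr h1
            · exact absurd h1 hx
          · exact Or.inl hxa
        have hmb : MeasurableSet ((Cset θ ξ m b)ᶜ) := (Cset_meas hθ hξ hC m b).compl
        have hun : MeasurableSet ((Cset θ ξ a b)ᶜ ∪ Cset θ ξ a m) :=
          (Cset_meas hθ hξ hC a b).compl.union hmeas1
        have h1 : V ((Cset θ ξ m b)ᶜ) ≤ V ((Cset θ ξ a b)ᶜ ∪ Cset θ ξ a m) :=
          V_mono hV h𝒮 hP hmb hun hsub
        have h2 : V ((Cset θ ξ a b)ᶜ ∪ Cset θ ξ a m)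
            ≤ V ((Cset θ ξ a b)ᶜ) + V (Cset θ ξ a m) :=
          V_subadd hV h𝒮 hP (Cset_meas hθ hξ hC a b).compl hmeas1
        have h3 : (0:ℝ) ≤ V ((Cset θ ξ m b)ᶜ) := V_nonneg hV h𝒮 hP hmb
        rw [hV0, h] at h2
        linarith
      · left
        exact ⟨hm1, h⟩
    -- the recursive bisection sequence
    set seq : ℕ → ℝ × ℝ := fun n => Nat.rec ((-C : ℝ), C)
      (fun _ p => if Pred (p.1, (p.1+p.2)/2) then (p.1, (p.1+p.2)/2)
        else ((p.1+p.2)/2, p.2)) n with hseqdef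
    have hseqsucc : ∀ n, seq (n+1) = if Pred ((seq n).1, ((seq n).1+(seq n).2)/2)
        then ((seq n).1, ((seq n).1+(seq n).2)/2) else (((seq n).1+(seq n).2)/2, (seq n).2) :=
      fun n => rfl
    have hseq : ∀ n, Pred (seq n) := by
      intro n
      induction n with
      | zero => exact hbase
      | succ n ih =>
        rw [hseqsucc n]
        by_cases h : Pred ((seq n).1, ((seq n).1+(seq n).2)/2)
        · rw [if_pos h]; exact h
        · rw [if_neg h]
          rcases hstep _ ih with h1 | h1
          · exact absurd h1 h
          · exact h1
    set A : ℕ → ℝ := fun n => (seq n).1 with hA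
    set B : ℕ → ℝ := fun n => (seq n).2 with hB
    have hwidth : ∀ n, B n - A n = 2*C/2^n := by
      intro n
      induction n with
      | zero =>
        have hseq0 : seq 0 = ((-C:ℝ), C) := rfl
        simp only [hA, hB, hseq0]
        rw [pow_zero, div_one]
        ring
      | succ n ih =>
        simp only [hA, hB, hseqsucc n]
        by_cases h : Pred ((seq n).1, ((seq n).1+(seq n).2)/2)
        · rw [if_pos h]
          simp only [hA, hB] at ih ⊢
          have heq : ((seq n).1+(seq n).2)/2 - (seq n).1 = ((seq n).2 - (seq n).1)/2 := by ring
          rw [heq, ih, pow_succ]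
          ring
        · rw [if_neg h]
          simp only [hA, hB] at ih ⊢
          have heq : (seq n).2 - ((seq n).1+(seq n).2)/2 = ((seq n).2 - (seq n).1)/2 := by ring
          rw [heq, ih, pow_succ]
          ring
    have hstepm : ∀ n, A n ≤ A (n+1) ∧ B (n+1) ≤ B n ∧ A (n+1) ≤ B (n+1) := by
      intro n
      have hab : A n ≤ B n := (hseq n).1
      have hab2 := (hseq (n+1)).1
      simp only [hA, hB, hseqsucc n]
      by_cases h : Pred ((seq n).1, ((seq n).1+(seq n).2)/2)
      · rw [if_pos h]
        simp only
        refine ⟨le_refl _, by simp only [hA, hB] at hab; linarith, h.1⟩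
      · rw [if_neg h]
        simp only
        simp only [hA, hB] at hab
        refine ⟨by linarith, le_refl _, ?_⟩
        rcases hstep _ (hseq n) with h1 | h1
        · exact absurd h1 h
        · exact h1.1
    have hAmono : Monotone A := monotone_nat_of_le_succ (fun n => (hstepm n).1)
    have hBanti : Antitone B := antitone_nat_of_succ_le (fun n => (hstepm n).2.1)
    have hAleB : ∀ p q, A p ≤ B q := by
      intro p q
      rcases le_total p q with h | h
      · exact le_trans (hAmono h) (hseq q).1
      · exact le_trans (hseq p).1 (hBanti h)
    have hbddA : BddAbove (Set.range A) := ⟨B 0, by rintro y ⟨n, rfl⟩; exact hAleB n 0⟩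
    set c : ℝ := ⨆ n, A n with hc
    have hAc : ∀ n, A n ≤ c := fun n => le_ciSup hbddA n
    have hcB : ∀ n, c ≤ B n := fun n => ciSup_le (fun p => hAleB p n)
    set Cn : ℕ → Set Ω := fun n => Cset θ ξ (A n) (B n) with hCn
    have hCmeas : ∀ n, MeasurableSet ((Cn n)ᶜ) := fun n => (Cset_meas hθ hξ hC _ _).compl
    have hCV : ∀ n, V ((Cn n)ᶜ) = 0 := fun n => (hseq n).2
    have hCanti : Antitone Cn :=
      antitone_nat_of_succ_le (fun n => Cset_mono (hstepm n).1 (hstepm n).2.1)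
    have hcomplmono : Monotone (fun n => (Cn n)ᶜ) :=
      fun p q h => Set.compl_subset_compl.mpr (hCanti h)
    have hInter : (⋂ n, Cn n) = {ω | Tendsto (fun n => avg θ ξ n ω) atTop (𝓝 c)} := by
      ext ω
      simp only [Set.mem_iInter, Set.mem_setOf_eq]
      constructor
      · intro h
        obtain ⟨c0, hc0m, hc0t⟩ := h 0
        have hc0n : ∀ n, c0 ∈ Set.Icc (A n) (B n) := by
          intro n
          obtain ⟨cn, hcnm, hcnt⟩ := h n
          rwa [tendsto_nhds_unique hc0t hcnt]
        have hclose : ∀ n, |c0 - c| ≤ 2*C/2^n := by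
          intro n
          have h1 := hc0n n
          have h2 := hAc n
          have h3 := hcB n
          rw [abs_le]
          constructor
          · have := hwidth n
            linarith [h1.1, h1.2]
          · have := hwidth n
            linarith [h1.1, h1.2]
        have htend0 : Tendsto (fun n : ℕ => 2*C/2^n) atTop (𝓝 0) := by
          have h1 : Tendsto (fun n : ℕ => ((1:ℝ)/2)^n) atTop (𝓝 0) :=
            tendsto_pow_atTop_nhds_zero_of_lt_one (by norm_num) (by norm_num)
          have h2 := h1.const_mul (2*C)
          rw [mul_zero] at h2
          refine h2.congr fun n => ?_
          rw [div_pow, one_pow]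
          ring
        have h0 : |c0 - c| ≤ 0 := ge_of_tendsto htend0
          (Filter.Eventually.of_forall hclose)
        have : c0 = c := by
          have := abs_nonneg (c0 - c)
          have h1 : |c0 - c| = 0 := le_antisymm h0 this
          have h2 : c0 - c = 0 := abs_eq_zero.mp h1
          linarith
        rwa [this] at hc0t
      · intro ht n
        exact ⟨c, ⟨hAc n, hcB n⟩, ht⟩
    refine ⟨c, ?_⟩
    have hUnion : (⋃ n, (Cn n)ᶜ)
        = {ω | ¬ Tendsto (fun n => avg θ ξ n ω) atTop (𝓝 c)} := by
      rw [← Set.compl_iInter, hInter]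
      rfl
    have htendV := hVb (fun n => (Cn n)ᶜ) hCmeas hcomplmono
    have hzero : (fun n => V ((Cn n)ᶜ)) = fun _ => (0:ℝ) := funext hCV
    rw [hzero] at htendV
    have hVU : V (⋃ n, (Cn n)ᶜ) = 0 := by
      have := tendsto_nhds_unique htendV tendsto_const_nhds
      simpa using this
    rw [hUnion] at hVU
    exact hVU
  · -- Birkhoff convergence → ergodic
    intro h B hB hinv
    set ξ : Ω → ℝ := B.indicator (fun _ => (1:ℝ)) with hξdef
    have hξm : Measurable ξ := measurable_const.indicator hB
    have hξb : ∀ ω, |ξ ω| ≤ 1 := by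
      intro ω
      by_cases hω : ω ∈ B
      · rw [hξdef, Set.indicator_of_mem hω]; norm_num
      · rw [hξdef, Set.indicator_of_notMem hω]; norm_num
    obtain ⟨c, hc⟩ := h ξ hξm ⟨1, hξb⟩
    have hind : ∀ ω : Ω, Tendsto
        (fun n : ℕ => (1 / (n : ℝ)) * ∑ k ∈ Finset.range n, ξ (θ^[k] ω))
        atTop (𝓝 (ξ ω)) := by
      intro ω
      have hev : ∀ n : ℕ, 1 ≤ n →
          (1 / (n : ℝ)) * ∑ k ∈ Finset.range n, ξ (θ^[k] ω) = ξ ω := by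
        intro n hn
        have hterm : ∀ k, ξ (θ^[k] ω) = ξ ω := by
          intro k
          by_cases hω : ω ∈ B
          · rw [hξdef, Set.indicator_of_mem hω,
              Set.indicator_of_mem ((orbit_mem hinv k ω).mpr hω)]
          · rw [hξdef, Set.indicator_of_notMem hω,
              Set.indicator_of_notMem (fun hmem => hω ((orbit_mem hinv k ω).mp hmem))]
        rw [Finset.sum_congr rfl (fun k _ => hterm k), Finset.sum_const, Finset.card_range,
          nsmul_eq_mul]
        have hn0 : (n:ℝ) ≠ 0 := by positivity
        field_simp
      refine Tendsto.congr' ?_ tendsto_const_nhds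
      filter_upwards [Filter.eventually_ge_atTop 1] with n hn
      exact (hev n hn).symm
    by_cases hc0 : c = 0
    · subst hc0
      have hNB : {ω | ¬ Tendsto
          (fun n : ℕ => (1 / (n : ℝ)) * ∑ k ∈ Finset.range n, ξ (θ^[k] ω))
          atTop (𝓝 (0:ℝ))} = B := by
        ext ω
        simp only [Set.mem_setOf_eq]
        constructor
        · intro hN
          by_contra hω
          apply hN
          have : ξ ω = 0 := Set.indicator_of_notMem hω _
          rw [← this]
          exact hind ω
        · intro hω hT
          have h1 : ξ ω = 1 := Set.indicator_of_mem hω _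
          have := tendsto_nhds_unique hT (hind ω)
          rw [h1] at this
          norm_num at this
      rw [hNB] at hc
      exact ⟨Or.inl hc, Or.inl hc⟩
    · by_cases hc1 : c = 1
      · subst hc1
        have hNB : {ω | ¬ Tendsto
            (fun n : ℕ => (1 / (n : ℝ)) * ∑ k ∈ Finset.range n, ξ (θ^[k] ω))
            atTop (𝓝 (1:ℝ))} = Bᶜ := by
          ext ω
          simp only [Set.mem_setOf_eq, Set.mem_compl_iff]
          constructor
          · intro hN
            by_contra hω
            apply hN
            have h1 : ξ ω = 1 := Set.indicator_of_mem hω _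
            simpa [h1] using hind ω
          · intro hω hT
            have h1 : ξ ω = 0 := Set.indicator_of_notMem hω _
            have := tendsto_nhds_unique hT (hind ω)
            rw [h1] at this
            norm_num at this
        rw [hNB] at hc
        exact ⟨Or.inr (V_one_of_compl_zero hV h𝒮 hP hB hc), Or.inr hc⟩
      · exfalso
        have hNU : {ω | ¬ Tendsto
            (fun n : ℕ => (1 / (n : ℝ)) * ∑ k ∈ Finset.range n, ξ (θ^[k] ω))
            atTop (𝓝 c)} = Set.univ := by
          ext ω
          simp only [Set.mem_setOf_eq, Set.mem_univ, iff_true]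
          intro hT
          have := tendsto_nhds_unique hT (hind ω)
          by_cases hω : ω ∈ B
          · rw [hξdef, Set.indicator_of_mem hω] at this
            exact hc1 this
          · rw [hξdef, Set.indicator_of_notMem hω] at this
            exact hc0 this
        rw [hNU, V_univ hV h𝒮 hP] at hc
        norm_num at hc
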